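/- In BCD subtyping, every type whose domain and codomain are defined is a subtype of the function type formed from them: A ≤ dom(A) → cod(A). -/

import Mathlib

inductive Ty : Type where
  | U : Ty
  | const : ℕ → Ty
  | arrow : Ty → Ty → Ty
  | inter : Ty → Ty → Ty

/-- The part relation A ∈⁺ B. -/
inductive Ty.Part : Ty → Ty → Prop where
  | atomU : Ty.Part .U .U
  | atomC (n : ℕ) : Ty.Part (.const n) (.const n)
  | arrow (A B : Ty) : Ty.Part (.arrow A B) (.arrow A B)
  | interL {A B C : Ty} : Ty.Part A B → Ty.Part A (.inter B C)
  | interR {A B C : Ty} : Ty.Part A C → Ty.Part A (.inter B C)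

/-- Containment A ⊆⁺ B: every part of A is a part of B. -/
def Ty.Contain (A B : Ty) : Prop := ∀ C, Ty.Part C A → Ty.Part C B

/-- Partial domain function. -/
def Ty.dom : Ty → Option Ty
  | .arrow A _ => some A
  | .inter A B => do pure (.inter (← A.dom) (← B.dom))
  | _ => none

/-- Partial codomain function. -/
def Ty.cod : Ty → Option Ty
  | .arrow _ B => some B
  | .inter A B => do pure (.inter (← A.cod) (← B.cod))
  | _ => none

/-- The top predicate: types equivalent to U. -/
inductive Ty.Top : Ty → Prop where
  | u : Ty.Top .U
  | arrow {A B : Ty} : Ty.Top B → Ty.Top (.arrow A B)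
  | inter {A B : Ty} : Ty.Top A → Ty.Top B → Ty.Top (.inter A B)

/-- topInCod(D): some function part of D has a top codomain. -/
def Ty.TopInCod (D : Ty) : Prop := ∃ A B : Ty, Ty.Part (.arrow A B) D ∧ Ty.Top B

/-- The new subtyping relation A <: B. -/
inductive Ty.NSub : Ty → Ty → Prop where
  | reflU : Ty.NSub .U .U
  | reflC (n : ℕ) : Ty.NSub (.const n) (.const n)
  | lbL {A B C : Ty} : Ty.NSub A C → Ty.NSub (.inter A B) C
  | lbR {A B C : Ty} : Ty.NSub B C → Ty.NSub (.inter A B) C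
  | glb {A C D : Ty} : Ty.NSub A C → Ty.NSub A D → Ty.NSub A (.inter C D)
  | arrow {A B C D dB cB : Ty} :
      Ty.Contain B A → B.dom = some dB → B.cod = some cB →
      Ty.NSub C dB → Ty.NSub cB D → ¬ Ty.Top D → ¬ Ty.TopInCod B →
      Ty.NSub A (.arrow C D)
  | utop {A : Ty} : Ty.NSub A .U
  | uarrow {A C D : Ty} : Ty.Top D → Ty.NSub A (.arrow C D)

/-- BCD subtyping A ≤ B. -/
inductive Ty.BSub : Ty → Ty → Prop where
  | refl (A : Ty) : Ty.BSub A A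
  | trans {A B C : Ty} : Ty.BSub A B → Ty.BSub B C → Ty.BSub A C
  | inclL (A B : Ty) : Ty.BSub (.inter A B) A
  | inclR (A B : Ty) : Ty.BSub (.inter A B) B
  | glb {A C D : Ty} : Ty.BSub A C → Ty.BSub A D → Ty.BSub A (.inter C D)
  | arrow {A B C D : Ty} : Ty.BSub C A → Ty.BSub B D → Ty.BSub (.arrow A B) (.arrow C D)
  | distrib (A B C : Ty) : Ty.BSub (.inter (.arrow A B) (.arrow A C)) (.arrow A (.inter B C))
  | utop (A : Ty) : Ty.BSub A .U
  | uarrow (C : Ty) : Ty.BSub .U (.arrow C .U)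

/-- C→D factors A. -/
def Ty.Factors (C D A : Ty) : Prop :=
  ∃ B dB cB : Ty, Ty.Contain B A ∧ B.dom = some dB ∧ B.cod = some cB ∧
    Ty.NSub C dB ∧ Ty.NSub cB D ∧ ¬ Ty.TopInCod B

def Ty.size : Ty → ℕ
  | .U => 0
  | .const _ => 0
  | .arrow A B => 1 + A.size + B.size
  | .inter A B => 1 + A.size + B.size

def Ty.depth : Ty → ℕ
  | .U => 0
  | .const _ => 0
  | .arrow A B => 1 + max A.depth B.depth
  | .inter A B => max A.depth B.depth

theorem bsub_dom_cod (A dA cA : Ty) (hd : A.dom = some dA) (hc : A.cod = some cA) :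
    Ty.BSub A (.arrow dA cA) := by
  induction A generalizing dA cA with
  | U => simp [Ty.dom] at hd
  | const n => simp [Ty.dom] at hd
  | arrow X Y => simp [Ty.dom, Ty.cod] at hd hc; subst hd hc; exact Ty.BSub.refl _
  | inter X Y ihX ihY =>
    simp [Ty.dom, Ty.cod, Option.bind_eq_some_iff] at hd hc
    obtain ⟨dX, hdX, dY, hdY, rfl⟩ := hd
    obtain ⟨cX, hcX, cY, hcY, rfl⟩ := hc
    have h1 : Ty.BSub (.inter X Y) (.arrow (.inter dX dY) cX) :=
      (Ty.BSub.inclL X Y).trans ((ihX dX cX hdX hcX).trans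
        (Ty.BSub.arrow (Ty.BSub.inclL _ _) (Ty.BSub.refl _)))
    have h2 : Ty.BSub (.inter X Y) (.arrow (.inter dX dY) cY) :=
      (Ty.BSub.inclR X Y).trans ((ihY dY cY hdY hcY).trans
        (Ty.BSub.arrow (Ty.BSub.inclR _ _) (Ty.BSub.refl _)))
    exact (Ty.BSub.glb h1 h2).trans (Ty.BSub.distrib _ _ _)
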